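/- Let f : ℝ → ℝ be a probability density function (f ≥ 0 and ∫_ℝ f = 1) that is differentiable everywhere with |f′(x)| ≤ M for all x ∈ ℝ, and let r > 0. Then |∫_{−∞}^{+∞} Φ(−|ε|/r) · (2·1{ε ≤ 0} − 1) · f(ε) dε| ≤ M r² / 2, where Φ is the standard normal cumulative distribution function. -/

import Mathlib

open MeasureTheory Real

/-- The standard normal cumulative distribution function
`Φ(x) = ∫_{-∞}^x (1/√(2π)) e^{-s²/2} ds`. -/
noncomputable def stdNormalCDF (x : ℝ) : ℝ :=
  ∫ s in Set.Iic x, (Real.sqrt (2 * Real.pi))⁻¹ * Real.exp (-s ^ 2 / 2)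

open Set Filter

noncomputable def gauss (s : ℝ) : ℝ :=
  (Real.sqrt (2 * Real.pi))⁻¹ * Real.exp (-s ^ 2 / 2)

lemma gauss_eq : gauss = ProbabilityTheory.gaussianPDFReal 0 1 := by
  ext x
  simp [gauss, ProbabilityTheory.gaussianPDFReal]

lemma gauss_nonneg (s : ℝ) : 0 ≤ gauss s := by
  unfold gauss
  positivity

lemma gauss_cont : Continuous gauss := by
  unfold gauss
  continuity

lemma gauss_integrable : Integrable gauss := by
  rw [gauss_eq]; exact ProbabilityTheory.integrable_gaussianPDFReal 0 1

lemma gauss_integral : ∫ s, gauss s = 1 := by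
  rw [gauss_eq]; exact ProbabilityTheory.integral_gaussianPDFReal_eq_one 0 one_ne_zero

lemma gauss_even (s : ℝ) : gauss (-s) = gauss s := by simp [gauss]

lemma gauss_hasDerivAt (s : ℝ) : HasDerivAt gauss (-s * gauss s) s := by
  have h1 : HasDerivAt (fun s : ℝ => -s ^ 2 / 2) (-s) s := by
    have := ((hasDerivAt_pow 2 s).neg).div_const 2
    exact this.congr_deriv (by simp; ring)
  have h2 := (h1.exp).const_mul (Real.sqrt (2 * Real.pi))⁻¹
  exact h2.congr_deriv (by unfold gauss; ring)

lemma stdNormalCDF_eq (x : ℝ) : stdNormalCDF x = ∫ s in Set.Iic x, gauss s := rfl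

lemma stdNormalCDF_nonneg (x : ℝ) : 0 ≤ stdNormalCDF x := by
  rw [stdNormalCDF_eq]
  exact setIntegral_nonneg measurableSet_Iic fun s _ => gauss_nonneg s

lemma stdNormalCDF_le_one (x : ℝ) : stdNormalCDF x ≤ 1 := by
  rw [stdNormalCDF_eq, ← gauss_integral]
  exact setIntegral_le_integral gauss_integrable (Filter.Eventually.of_forall gauss_nonneg)

lemma stdNormalCDF_hasDerivAt (x : ℝ) : HasDerivAt stdNormalCDF (gauss x) x := by
  have heq : stdNormalCDF = fun y => stdNormalCDF 0 + ∫ t in (0:ℝ)..y, gauss t := by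
    funext y
    rw [stdNormalCDF_eq, stdNormalCDF_eq,
      ← intervalIntegral.integral_Iic_sub_Iic gauss_integrable.integrableOn
        gauss_integrable.integrableOn]
    ring
  rw [heq]
  have h := intervalIntegral.integral_hasDerivAt_right
    (gauss_integrable.intervalIntegrable (a := (0:ℝ)) (b := x))
    (gauss_cont.stronglyMeasurableAtFilter _ _)
    gauss_cont.continuousAt
  exact h.const_add (stdNormalCDF 0)

lemma stdNormalCDF_continuous : Continuous stdNormalCDF :=
  continuous_iff_continuousAt.2 fun x => (stdNormalCDF_hasDerivAt x).continuousAt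

lemma stdNormalCDF_neg_eq (x : ℝ) : stdNormalCDF (-x) = ∫ s in Set.Ioi x, gauss s := by
  rw [stdNormalCDF_eq, ← integral_comp_neg_Ioi]
  simp_rw [gauss_even]

lemma stdNormalCDF_zero : stdNormalCDF 0 = 1/2 := by
  have h1 : stdNormalCDF 0 + ∫ s in Set.Ioi (0:ℝ), gauss s = 1 := by
    rw [stdNormalCDF_eq, ← gauss_integral,
      ← setIntegral_union (Iic_disjoint_Ioi le_rfl) measurableSet_Ioi
        gauss_integrable.integrableOn gauss_integrable.integrableOn,
      Set.Iic_union_Ioi, setIntegral_univ]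
  have h2 : stdNormalCDF 0 = ∫ s in Set.Ioi (0:ℝ), gauss s := by
    simpa using stdNormalCDF_neg_eq 0
  linarith [h1, h2]

lemma stdNormalCDF_tendsto_atTop : Tendsto stdNormalCDF atTop (nhds 1) := by
  have h := tendsto_setIntegral_of_monotone (μ := volume) (f := gauss)
    (s := fun x : ℝ => Set.Iic x) (fun x => measurableSet_Iic)
    (fun a b hab => Set.Iic_subset_Iic.2 hab) (by
      rw [Set.iUnion_Iic]; exact gauss_integrable.integrableOn)
  rw [Set.iUnion_Iic, setIntegral_univ, gauss_integral] at h
  exact h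

lemma stdNormalCDF_neg_le {x : ℝ} (hx : 2 ≤ x) :
    stdNormalCDF (-x) ≤ (Real.sqrt (2 * Real.pi))⁻¹ * Real.exp (-x) := by
  rw [stdNormalCDF_neg_eq]
  have hle : ∀ s ∈ Set.Ioi x, gauss s ≤ (Real.sqrt (2 * Real.pi))⁻¹ * Real.exp (-s) := by
    intro s hs
    have hs2 : 2 ≤ s := hx.trans (le_of_lt hs)
    have : -s ^ 2 / 2 ≤ -s := by nlinarith
    exact mul_le_mul_of_nonneg_left (Real.exp_le_exp.2 this)
      (by positivity)
  calc ∫ s in Set.Ioi x, gauss s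
      ≤ ∫ s in Set.Ioi x, (Real.sqrt (2 * Real.pi))⁻¹ * Real.exp (-s) := by
        refine setIntegral_mono_on gauss_integrable.integrableOn ?_ measurableSet_Ioi hle
        have := (exp_neg_integrableOn_Ioi x one_pos).const_mul (Real.sqrt (2 * Real.pi))⁻¹
        simpa [IntegrableOn] using this
    _ = (Real.sqrt (2 * Real.pi))⁻¹ * Real.exp (-x) := by
        rw [integral_const_mul, integral_exp_neg_Ioi]

lemma poly_exp_tendsto (n : ℕ) {b : ℝ} (hb : 0 < b) :
    Tendsto (fun u : ℝ => u ^ n * Real.exp (-b * u)) atTop (nhds 0) := by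
  have h := tendsto_rpow_mul_exp_neg_mul_atTop_nhds_zero n b hb
  refine h.congr' ?_
  filter_upwards [eventually_gt_atTop 0] with u hu
  rw [Real.rpow_natCast]

section r
variable {r : ℝ} (hr : 0 < r)

noncomputable def Kfun (r : ℝ) (u : ℝ) : ℝ :=
  ((u ^ 2 + r ^ 2) / 2) * stdNormalCDF (-u / r) - (r * u / 2) * gauss (u / r)
    + r ^ 2 * stdNormalCDF (u / r)

include hr

lemma Kfun_hasDerivAt (u : ℝ) :
    HasDerivAt (Kfun r) (u * stdNormalCDF (-u / r)) u := by
  have hr0 : r ≠ 0 := ne_of_gt hr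
  have d1 : HasDerivAt (fun u : ℝ => stdNormalCDF (-u / r)) (gauss (-u / r) * (-1 / r)) u :=
    by have := (stdNormalCDF_hasDerivAt (-u / r)).comp u (((hasDerivAt_id u).neg).div_const r); exact this
  have d2 : HasDerivAt (fun u : ℝ => gauss (u / r)) (-(u / r) * gauss (u / r) * (1 / r)) u :=
    by have := (gauss_hasDerivAt (u / r)).comp u ((hasDerivAt_id u).div_const r); exact this
  have d3 : HasDerivAt (fun u : ℝ => stdNormalCDF (u / r)) (gauss (u / r) * (1 / r)) u :=
    by have := (stdNormalCDF_hasDerivAt (u / r)).comp u ((hasDerivAt_id u).div_const r); exact this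
  have hA : HasDerivAt (fun u : ℝ => (u ^ 2 + r ^ 2) / 2) (u) u := by
    have := ((hasDerivAt_pow 2 u).add_const (r ^ 2)).div_const 2
    refine this.congr_deriv ?_
    push_cast
    ring
  have hC : HasDerivAt (fun u : ℝ => r * u / 2) (r / 2) u := by
    have := ((hasDerivAt_id u).const_mul r).div_const 2
    refine this.congr_deriv ?_
    ring
  have big := ((hA.mul d1).sub (hC.mul d2)).add ((d3).const_mul (r ^ 2))
  refine big.congr_deriv ?_
  have he : gauss (-u / r) = gauss (u / r) := by rw [neg_div]; exact gauss_even _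
  rw [he]
  field_simp
  ring

lemma Kfun_tendsto : Tendsto (Kfun r) atTop (nhds (r ^ 2)) := by
  have hc : (0:ℝ) ≤ (Real.sqrt (2 * Real.pi))⁻¹ := by positivity
  set c := (Real.sqrt (2 * Real.pi))⁻¹ with hcdef
  have hb : (0:ℝ) < 1 / r := by positivity
  -- the tail part tends to 0
  have hA : Tendsto (fun u : ℝ => ((u ^ 2 + r ^ 2) / 2) * stdNormalCDF (-u / r)
      - (r * u / 2) * gauss (u / r)) atTop (nhds 0) := by
    apply squeeze_zero_norm'
      (a := fun u : ℝ => c * (u ^ 2 * Real.exp (-(1/r) * u))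
        + (c * r ^ 2) * (u ^ 0 * Real.exp (-(1/r) * u))
        + (c * r) * (u ^ 1 * Real.exp (-(1/r) * u)))
    · filter_upwards [eventually_ge_atTop (2 * r), eventually_gt_atTop 0] with u hu hu0
      have h2 : 2 ≤ u / r := (le_div_iff₀ hr).2 (by linarith)
      have hexp : Real.exp (-(u / r)) = Real.exp (-(1/r) * u) := by ring_nf
      have hΦ : stdNormalCDF (-u / r) ≤ c * Real.exp (-(1/r) * u) := by
        rw [neg_div]
        calc stdNormalCDF (-(u / r)) ≤ c * Real.exp (-(u / r)) := stdNormalCDF_neg_le h2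
          _ = c * Real.exp (-(1/r) * u) := by rw [hexp]
      have hΦ0 : 0 ≤ stdNormalCDF (-u / r) := stdNormalCDF_nonneg _
      have hg : gauss (u / r) ≤ c * Real.exp (-(1/r) * u) := by
        have : -(u / r) ^ 2 / 2 ≤ -(u / r) := by nlinarith
        calc gauss (u / r) = c * Real.exp (-(u / r) ^ 2 / 2) := rfl
          _ ≤ c * Real.exp (-(u / r)) := mul_le_mul_of_nonneg_left (Real.exp_le_exp.2 this) hc
          _ = c * Real.exp (-(1/r) * u) := by rw [hexp]
      have hg0 : 0 ≤ gauss (u / r) := gauss_nonneg _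
      have hT1 : ‖((u ^ 2 + r ^ 2) / 2) * stdNormalCDF (-u / r)‖
          ≤ ((u ^ 2 + r ^ 2) / 2) * (c * Real.exp (-(1/r) * u)) := by
        rw [Real.norm_eq_abs, abs_of_nonneg (by positivity)]
        exact mul_le_mul_of_nonneg_left hΦ (by positivity)
      have hT2 : ‖(r * u / 2) * gauss (u / r)‖
          ≤ (r * u / 2) * (c * Real.exp (-(1/r) * u)) := by
        rw [Real.norm_eq_abs, abs_of_nonneg (by positivity)]
        exact mul_le_mul_of_nonneg_left hg (by positivity)
      have := norm_sub_le (((u ^ 2 + r ^ 2) / 2) * stdNormalCDF (-u / r))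
        ((r * u / 2) * gauss (u / r))
      have hE : (0:ℝ) < Real.exp (-(1/r) * u) := Real.exp_pos _
      calc ‖((u ^ 2 + r ^ 2) / 2) * stdNormalCDF (-u / r) - (r * u / 2) * gauss (u / r)‖
          ≤ ((u ^ 2 + r ^ 2) / 2) * (c * Real.exp (-(1/r) * u))
            + (r * u / 2) * (c * Real.exp (-(1/r) * u)) := by
            exact this.trans (add_le_add hT1 hT2)
        _ = ((u ^ 2 + r ^ 2) / 2 + r * u / 2) * (c * Real.exp (-(1/r) * u)) := by ring
        _ ≤ (u ^ 2 + r ^ 2 + r * u) * (c * Real.exp (-(1/r) * u)) := by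
            refine mul_le_mul_of_nonneg_right ?_ (by positivity)
            nlinarith
        _ = c * (u ^ 2 * Real.exp (-(1/r) * u))
            + (c * r ^ 2) * (u ^ 0 * Real.exp (-(1/r) * u))
            + (c * r) * (u ^ 1 * Real.exp (-(1/r) * u)) := by ring
    · have t2 := (poly_exp_tendsto 2 hb).const_mul c
      have t0 := (poly_exp_tendsto 0 hb).const_mul (c * r ^ 2)
      have t1 := (poly_exp_tendsto 1 hb).const_mul (c * r)
      have := (t2.add t0).add t1
      simpa using this
  have hB : Tendsto (fun u : ℝ => r ^ 2 * stdNormalCDF (u / r)) atTop (nhds (r ^ 2)) := by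
    have hdiv : Tendsto (fun u : ℝ => u / r) atTop atTop :=
      tendsto_id.atTop_div_const hr
    have := (stdNormalCDF_tendsto_atTop.comp hdiv).const_mul (r ^ 2)
    simpa using this
  have := hA.add hB
  rw [zero_add] at this
  exact this

lemma Kfun_integrableOn :
    IntegrableOn (fun u : ℝ => u * stdNormalCDF (-u / r)) (Set.Ioi 0) := by
  refine integrableOn_Ioi_deriv_of_nonneg ?_ (fun x hx => Kfun_hasDerivAt hr x) ?_ (Kfun_tendsto hr)
  · refine Continuous.continuousWithinAt ?_
    unfold Kfun
    exact (((continuous_pow 2).add continuous_const).div_const 2 |>.mul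
        (stdNormalCDF_continuous.comp ((continuous_id.neg).div_const r))).sub
        (((continuous_const.mul continuous_id).div_const 2).mul
          (gauss_cont.comp (continuous_id.div_const r))) |>.add
        (continuous_const.mul (stdNormalCDF_continuous.comp (continuous_id.div_const r)))
  · intro x hx
    exact mul_nonneg (le_of_lt hx) (stdNormalCDF_nonneg _)

lemma Kfun_integral :
    ∫ u in Set.Ioi (0:ℝ), u * stdNormalCDF (-u / r) = r ^ 2 / 4 := by
  have h := integral_Ioi_of_hasDerivAt_of_tendsto' (fun x _ => Kfun_hasDerivAt hr x)
    (Kfun_integrableOn hr) (Kfun_tendsto hr)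
  rw [h]
  have : Kfun r 0 = 3 / 4 * r ^ 2 := by
    simp [Kfun, stdNormalCDF_zero]
    ring
  rw [this]; ring

end r

/-- If `f` is an everywhere differentiable probability density with `|f'| ≤ M`
and `r > 0`, then `|∫ Φ(-|ε|/r) (2·1{ε ≤ 0} - 1) f(ε) dε| ≤ M r² / 2`. -/
theorem abs_integral_smoothed_score_bias_le {f : ℝ → ℝ} {M r : ℝ}
    (hf_nonneg : ∀ x, 0 ≤ f x) (hf_int : ∫ x : ℝ, f x = 1)
    (hf_diff : Differentiable ℝ f) (hf_deriv : ∀ x, |deriv f x| ≤ M)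
    (hr : 0 < r) :
    |∫ ε : ℝ, stdNormalCDF (-|ε| / r) *
        (2 * (if ε ≤ 0 then (1 : ℝ) else 0) - 1) * f ε| ≤ M * r ^ 2 / 2 := by
  set g : ℝ → ℝ := fun ε => stdNormalCDF (-|ε| / r) *
      (2 * (if ε ≤ 0 then (1 : ℝ) else 0) - 1) * f ε with hgdef
  have hM : 0 ≤ M := le_trans (abs_nonneg _) (hf_deriv 0)
  have hfInt : Integrable f := by
    by_contra h
    rw [integral_undef h] at hf_int
    norm_num at hf_int
  have hfc : Continuous f := hf_diff.continuous
  have hmeas : AEStronglyMeasurable g volume := by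
    apply Measurable.aestronglyMeasurable
    refine Measurable.mul (Measurable.mul ?_ ?_) hfc.measurable
    · exact (stdNormalCDF_continuous.comp ((continuous_abs.neg).div_const r)).measurable
    · have : Measurable fun ε : ℝ => (if ε ≤ 0 then (1:ℝ) else 0) :=
        Measurable.ite measurableSet_Iic measurable_const measurable_const
      exact (this.const_mul 2).sub measurable_const
  have hbound : ∀ ε, ‖g ε‖ ≤ f ε := by
    intro ε
    rw [hgdef]
    simp only [Real.norm_eq_abs, abs_mul]
    have h1 : |stdNormalCDF (-|ε| / r)| ≤ 1 := by
      rw [abs_of_nonneg (stdNormalCDF_nonneg _)]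
      exact stdNormalCDF_le_one _
    have h2 : |2 * (if ε ≤ 0 then (1:ℝ) else 0) - 1| = 1 := by
      by_cases h : ε ≤ 0 <;> norm_num [h]
    rw [h2, mul_one, abs_of_nonneg (hf_nonneg ε)]
    exact mul_le_of_le_one_left (hf_nonneg ε) h1
  have hgInt : Integrable g := hfInt.mono' hmeas (ae_of_all _ hbound)
  have hemb : MeasurableEmbedding (fun x : ℝ => -x) := (Homeomorph.neg ℝ).measurableEmbedding
  have hmapneg : Measure.map (fun x : ℝ => -x) volume = volume := Measure.map_neg_eq_self _
  have hgnegInt : Integrable (fun ε : ℝ => g (-ε)) := by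
    have h1 : Integrable g (Measure.map (fun x : ℝ => -x) volume) := by rwa [hmapneg]
    exact hemb.integrable_map_iff.1 h1
  have hrefl : ∫ ε : ℝ, g (-ε) = ∫ ε : ℝ, g ε := by
    rw [← hemb.integral_map, hmapneg]
  -- Lipschitz bound
  have lip : ∀ x y : ℝ, |f x - f y| ≤ M * |x - y| := by
    have hl : LipschitzWith M.toNNReal f :=
      lipschitzWith_of_nnnorm_deriv_le hf_diff (fun x => by
        rw [← NNReal.coe_le_coe, Real.coe_toNNReal M hM]
        simpa [Real.norm_eq_abs] using hf_deriv x)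
    intro x y
    have := hl.dist_le_mul x y
    simpa [Real.dist_eq, Real.coe_toNNReal M hM] using this
  -- integrability and value of the dominating function
  have h1 : IntegrableOn (fun ε : ℝ => |ε| * stdNormalCDF (-|ε| / r)) (Set.Ioi 0) := by
    refine (Kfun_integrableOn hr).congr_fun ?_ measurableSet_Ioi
    intro x hx
    simp only []
    rw [abs_of_pos hx]
  have h2 : IntegrableOn (fun ε : ℝ => |ε| * stdNormalCDF (-|ε| / r)) (Set.Iic 0) := by
    rw [← hmapneg, hemb.integrableOn_map_iff]
    simp_rw [Function.comp_def, abs_neg, neg_preimage, neg_Iic, neg_zero]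
    exact Iff.mpr integrableOn_Ici_iff_integrableOn_Ioi h1
  have habsInt : Integrable (fun ε : ℝ => |ε| * stdNormalCDF (-|ε| / r)) := by
    rw [← integrableOn_univ, ← Set.Iic_union_Ioi (a := (0:ℝ))]
    exact h2.union h1
  have habs : ∫ ε : ℝ, |ε| * stdNormalCDF (-|ε| / r) = r ^ 2 / 2 := by
    rw [integral_comp_abs (f := fun u => u * stdNormalCDF (-u / r)), Kfun_integral hr]
    ring
  -- a.e. pointwise bound
  have hae : ∀ᵐ ε : ℝ, ‖g ε + g (-ε)‖ ≤ 2 * M * (|ε| * stdNormalCDF (-|ε| / r)) := by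
    have h0 : ∀ᵐ ε : ℝ, ε ≠ 0 := by
      refine ae_iff.2 ?_
      have : {a : ℝ | ¬ a ≠ 0} = {0} := by ext a; simp
      rw [this]
      exact measure_singleton 0
    filter_upwards [h0] with ε hε
    have key : ‖g ε + g (-ε)‖ = stdNormalCDF (-|ε| / r) * |f ε - f (-ε)| := by
      rcases lt_or_gt_of_ne hε with h | h
      · have hc1 : ε ≤ 0 := le_of_lt h
        have hc2 : ¬ (-ε ≤ 0) := by simp; linarith
        simp only [hgdef, abs_neg, if_pos hc1, if_neg hc2, Real.norm_eq_abs]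
        rw [show stdNormalCDF (-|ε| / r) * (2 * 1 - 1) * f ε
            + stdNormalCDF (-|ε| / r) * (2 * 0 - 1) * f (-ε)
            = stdNormalCDF (-|ε| / r) * (f ε - f (-ε)) by ring]
        rw [abs_mul, abs_of_nonneg (stdNormalCDF_nonneg _)]
      · have hc1 : ¬ (ε ≤ 0) := by simp; linarith
        have hc2 : -ε ≤ 0 := by linarith
        simp only [hgdef, abs_neg, if_neg hc1, if_pos hc2, Real.norm_eq_abs]
        rw [show stdNormalCDF (-|ε| / r) * (2 * 0 - 1) * f ε
            + stdNormalCDF (-|ε| / r) * (2 * 1 - 1) * f (-ε)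
            = stdNormalCDF (-|ε| / r) * (f (-ε) - f ε) by ring]
        rw [abs_mul, abs_of_nonneg (stdNormalCDF_nonneg _), abs_sub_comm]
    rw [key]
    have habs2 : |ε - -ε| = 2 * |ε| := by
      rw [sub_neg_eq_add, ← two_mul, abs_mul]
      simp
    calc stdNormalCDF (-|ε| / r) * |f ε - f (-ε)|
        ≤ stdNormalCDF (-|ε| / r) * (M * |ε - -ε|) :=
          mul_le_mul_of_nonneg_left (lip ε (-ε)) (stdNormalCDF_nonneg _)
      _ = 2 * M * (|ε| * stdNormalCDF (-|ε| / r)) := by rw [habs2]; ring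
  -- conclude
  have hsum : ∫ ε : ℝ, (g ε + g (-ε)) = 2 * ∫ ε : ℝ, g ε := by
    rw [integral_add hgInt hgnegInt, hrefl]
    ring
  have hmain : ‖∫ ε : ℝ, (g ε + g (-ε))‖
      ≤ ∫ ε : ℝ, 2 * M * (|ε| * stdNormalCDF (-|ε| / r)) :=
    norm_integral_le_of_norm_le (habsInt.const_mul (2 * M)) hae
  rw [hsum, integral_const_mul, habs] at hmain
  rw [Real.norm_eq_abs, abs_mul] at hmain
  have : |(2:ℝ)| = 2 := by norm_num
  rw [this] at hmain
  have hfinal : |∫ ε : ℝ, g ε| ≤ M * r ^ 2 / 2 := by nlinarith [abs_nonneg (∫ ε : ℝ, g ε)]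
  exact hfinal
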